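/- arXiv:1407.4425 — 15 statements merged into one kernel-verified Lean document; each statement's English description precedes it below -/
import Mathlib

section
/- If a category A is complete, then the class of corecursive algebras for an endofunctor H : A → A is closed under products formed in the category of H-algebras (which are computed on the level of A). In particular, the product of a family of corecursive H-algebras is corecursive. -/
open CategoryTheory CategoryTheory.Limits CategoryTheory.Endofunctor

universe v u

variable {A : Type u} [Category.{v} A]

/-- An `H`-algebra is corecursive if every coalgebra `e : X ⟶ H.obj X` admits a unique
coalgebra-to-algebra morphism into it. -/
def IsCorecursive {H : A ⥤ A} (alg : Endofunctor.Algebra H) : Prop :=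
  ∀ (X : A) (e : X ⟶ H.obj X), ∃! s : X ⟶ alg.a, s = e ≫ H.map s ≫ alg.str

section Aux

variable [HasLimits A] {H : A ⥤ A}

/-- The product algebra built on the product of the carriers. -/
noncomputable def prodAlg {ι : Type v} (D : ι → Endofunctor.Algebra H) :
    Endofunctor.Algebra H where
  a := ∏ᶜ fun i => (D i).a
  str := Pi.lift fun i => H.map (Pi.π _ i) ≫ (D i).str

@[simp]
lemma prodAlg_str_π {ι : Type v} (D : ι → Endofunctor.Algebra H) (i : ι) :
    (prodAlg D).str ≫ Pi.π _ i = H.map (Pi.π _ i) ≫ (D i).str := by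
  simp [prodAlg]

/-- The product fan in the category of algebras. -/
noncomputable def prodAlgFan {ι : Type v} (D : ι → Endofunctor.Algebra H) : Fan D :=
  Fan.mk (prodAlg D) fun i => { f := Pi.π _ i, h := (prodAlg_str_π D i).symm }

/-- The product fan is a limit fan. -/
noncomputable def prodAlgFanIsLimit {ι : Type v} (D : ι → Endofunctor.Algebra H) :
    IsLimit (prodAlgFan D) :=
  mkFanLimit _
    (fun s => { f := Pi.lift fun i => (s.proj i).f
                h := by
                  apply Pi.hom_ext
                  intro i
                  simp [prodAlgFan, prodAlg, ← H.map_comp_assoc] })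
    (fun s i => by
      apply Endofunctor.Algebra.ext
      simp [prodAlgFan, prodAlg])
    (fun s m hm => by
      apply Endofunctor.Algebra.ext
      apply Pi.hom_ext
      intro i
      have := congrArg Endofunctor.Algebra.Hom.f (hm i)
      exact this.trans (Pi.lift_π (fun i => (s.proj i).f) i).symm)

/-- Corecursiveness transfers along isomorphisms of algebras. -/
lemma isCorecursive_of_iso {a b : Endofunctor.Algebra H} (φ : a ≅ b)
    (ha : IsCorecursive a) : IsCorecursive b := by
  intro X e
  obtain ⟨s, hs, hu⟩ := ha X e
  have hcomm : H.map φ.hom.f ≫ b.str = a.str ≫ φ.hom.f := φ.hom.h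
  have hcomm' : H.map φ.inv.f ≫ a.str = b.str ≫ φ.inv.f := φ.inv.h
  refine ⟨s ≫ φ.hom.f, ?_, ?_⟩
  · show s ≫ φ.hom.f = e ≫ H.map (s ≫ φ.hom.f) ≫ b.str
    conv_lhs => rw [hs]
    simp only [H.map_comp, Category.assoc, hcomm]
  · intro t ht
    have hf : t ≫ φ.inv.f = e ≫ H.map (t ≫ φ.inv.f) ≫ a.str := by
      conv_lhs => rw [ht]
      simp only [H.map_comp, Category.assoc, hcomm']
    have h1 := hu _ hf
    have hid : φ.inv.f ≫ φ.hom.f = 𝟙 b.a := by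
      rw [← Endofunctor.Algebra.comp_f, Iso.inv_hom_id]; rfl
    calc t = (t ≫ φ.inv.f) ≫ φ.hom.f := by rw [Category.assoc, hid, Category.comp_id]
      _ = s ≫ φ.hom.f := by rw [h1]

/-- The product algebra of corecursive algebras is corecursive. -/
lemma prodAlg_isCorecursive {ι : Type v} (D : ι → Endofunctor.Algebra H)
    (hD : ∀ i, IsCorecursive (D i)) : IsCorecursive (prodAlg D) := by
  intro X e
  choose s hs hu using fun i => hD i X e
  refine ⟨Pi.lift s, ?_, ?_⟩
  · apply Pi.hom_ext
    intro i
    dsimp only [prodAlg]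
    simp only [limit.lift_π, Fan.mk_π_app, Category.assoc]
    rw [ ← Category.assoc (H.map _), ← H.map_comp]
    simpa using hs i
  · intro t ht
    apply Pi.hom_ext
    intro i
    simp only [limit.lift_π, Fan.mk_π_app]
    apply hu i
    conv_lhs => rw [ht]
    dsimp only [prodAlg]
    rw [Category.assoc, Category.assoc, limit.lift_π, Fan.mk_π_app]
    exact congrArg (e ≫ ·) (H.map_comp_assoc (X := X) (Y := ∏ᶜ fun i => (D i).a) t _ _).symm

end Aux

/-- In a complete category, corecursive algebras are closed under products in `Alg H`:
the product of a family of corecursive algebras (formed in the category of `H`-algebras)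
is corecursive. -/
theorem product_of_corecursive_isCorecursive
    [HasLimits A] (H : A ⥤ A) {ι : Type v} (D : ι → Endofunctor.Algebra H)
    (hD : ∀ i, IsCorecursive (D i))
    (c : Fan D) (hc : IsLimit c) : IsCorecursive c.pt := by
  exact isCorecursive_of_iso
    (IsLimit.conePointUniqueUpToIso (prodAlgFanIsLimit D) hc)
    (prodAlg_isCorecursive D hD)
end

section
/- Let (A,a) be an H-algebra and f : B → A a morphism. Then (A,a) is corecursive if and only if the algebra with carrier HA + B and structure map inl ∘ H[a,f] : H(HA+B) → HA+B is corecursive. -/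
open CategoryTheory CategoryTheory.Limits

universe v u

variable {A : Type u} [Category.{v} A]

/-- An algebra structure `a : H.obj A₀ ⟶ A₀` is corecursive if every coalgebra
`e : X ⟶ H.obj X` has a unique solution `s = e ≫ H.map s ≫ a`. -/
def IsCorecursiveAlg (H : A ⥤ A) (A₀ : A) (a : H.obj A₀ ⟶ A₀) : Prop :=
  ∀ (X : A) (e : X ⟶ H.obj X), ∃! s : X ⟶ A₀, s = e ≫ H.map s ≫ a

private lemma fold_map {H : A ⥤ A} {X Y A₀ Z : A} (e : X ⟶ H.obj X)
    (s : X ⟶ Y) (d : Y ⟶ A₀) (g : H.obj A₀ ⟶ Z) :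
    e ≫ H.map s ≫ H.map d ≫ g = e ≫ H.map (s ≫ d) ≫ g := by
  simp [H.map_comp]

/-- `(A₀, a)` is corecursive iff the algebra `inl ∘ H[a,f]` on `H.obj A₀ ⨿ B` is corecursive. -/
theorem corecursive_iff_coprod_corecursive
    [HasBinaryCoproducts A] (H : A ⥤ A) (A₀ B : A)
    (a : H.obj A₀ ⟶ A₀) (f : B ⟶ A₀) :
    IsCorecursiveAlg H A₀ a ↔
      IsCorecursiveAlg H (H.obj A₀ ⨿ B) (H.map (coprod.desc a f) ≫ coprod.inl) := by
  constructor
  · intro hA X e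
    obtain ⟨t, ht, huniq⟩ := hA X e
    have hcomp : (e ≫ H.map t ≫ coprod.inl) ≫ coprod.desc a f = t := by
      simp [ht.symm, coprod.inl_desc]
    refine ⟨e ≫ H.map t ≫ coprod.inl, ?_, ?_⟩
    · show e ≫ H.map t ≫ coprod.inl
        = e ≫ H.map (e ≫ H.map t ≫ coprod.inl) ≫ H.map (coprod.desc a f) ≫ coprod.inl
      rw [fold_map, hcomp]
    · intro s hs
      replace hs : s = e ≫ H.map s ≫ H.map (coprod.desc a f) ≫ coprod.inl := hs
      have hts : s ≫ coprod.desc a f = e ≫ H.map (s ≫ coprod.desc a f) ≫ a := by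
        conv_lhs => rw [hs]
        simp [H.map_comp, coprod.inl_desc]
      have h2 := huniq _ hts
      rw [hs, fold_map, h2]
  · intro hB X e
    obtain ⟨s, hs, huniq⟩ := hB X e
    replace hs : s = e ≫ H.map s ≫ H.map (coprod.desc a f) ≫ coprod.inl := hs
    refine ⟨s ≫ coprod.desc a f, ?_, ?_⟩
    · show s ≫ coprod.desc a f = e ≫ H.map (s ≫ coprod.desc a f) ≫ a
      conv_lhs => rw [hs]
      simp [H.map_comp, coprod.inl_desc]
    · intro t ht
      replace ht : t = e ≫ H.map t ≫ a := ht
      have hcomp : (e ≫ H.map t ≫ coprod.inl) ≫ coprod.desc a f = t := by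
        simp [ht.symm, coprod.inl_desc]
      have hsol : e ≫ H.map t ≫ (coprod.inl : H.obj A₀ ⟶ H.obj A₀ ⨿ B)
          = e ≫ H.map (e ≫ H.map t ≫ coprod.inl) ≫ H.map (coprod.desc a f) ≫ coprod.inl := by
        rw [fold_map, hcomp]
      have h2 := huniq _ hsol
      rw [ht, ← h2]
      simp [coprod.inl_desc]
end

section
/- A binary algebra (A, *) in Set (i.e., an algebra for HX = X × X) is corecursive if and only if A has an idempotent element i = i * i which is the unique completely factorizable element of A, where the set of completely factorizable elements is the largest subset S ⊆ A such that every a ∈ S can be written as a = b * c with b, c ∈ S. -/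
/-- `a` is completely factorizable for the binary operation `op` if it belongs to some set `S`
each of whose elements factorizes as `op b c` with `b, c ∈ S` (i.e. `a` is in the largest
such set, the greatest fixed point). -/
def CompletelyFactorizable {A : Type} (op : A → A → A) (a : A) : Prop :=
  ∃ S : Set A, a ∈ S ∧ ∀ x ∈ S, ∃ b ∈ S, ∃ c ∈ S, x = op b c

/-- A binary algebra `(A, op)` in `Set` is corecursive iff it has an idempotent `i = op i i`
which is the unique completely factorizable element. -/
theorem binary_corecursive_iff_unique_completely_factorizable_idempotent
    (A : Type) (op : A → A → A) :
    (∀ (X : Type) (e : X → X × X),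
        ∃! s : X → A, ∀ x, s x = op (s (e x).1) (s (e x).2)) ↔
      ∃ i : A, i = op i i ∧ ∀ a : A, CompletelyFactorizable op a ↔ a = i := by
  constructor
  · intro h
    obtain ⟨s, hs, hu⟩ := h Unit (fun _ => ((), ()))
    refine ⟨s (), hs (), fun a => ⟨?_, ?_⟩⟩
    · rintro ⟨S, haS, hS⟩
      choose b hb c hc hbc using hS
      obtain ⟨t, ht, htu⟩ := h S (fun x => (⟨b x.1 x.2, hb x.1 x.2⟩, ⟨c x.1 x.2, hc x.1 x.2⟩))
      have h1 : (fun x : S => (x : A)) = t := htu _ (fun x => hbc x.1 x.2)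
      have h2 : (fun _ : S => s ()) = t := htu _ (fun _ => hs ())
      exact congrFun (h1.trans h2.symm) ⟨a, haS⟩
    · rintro rfl
      exact ⟨{s ()}, rfl, fun x hx => ⟨s (), rfl, s (), rfl, by simp at hx; rw [hx]; exact hs ()⟩⟩
  · rintro ⟨i, hi, hcf⟩ X e
    refine ⟨fun _ => i, fun _ => hi, fun s hs => ?_⟩
    funext x
    exact (hcf (s x)).1 ⟨Set.range s, ⟨x, rfl⟩, by rintro _ ⟨y, rfl⟩; exact ⟨_, ⟨_, rfl⟩, _, ⟨_, rfl⟩, hs y⟩⟩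
end

section
/- If H has a terminal coalgebra τ : T → HT, then the algebra τ⁻¹ : HT → T (structure inverted via Lambek's Lemma) is corecursive, and moreover it is the initial corecursive algebra: for every corecursive algebra (A,a) there is a unique H-algebra homomorphism from (T, τ⁻¹) to (A,a). -/
open CategoryTheory CategoryTheory.Limits CategoryTheory.Endofunctor

universe v u

variable {A : Type u} [Category.{v} A]

/-- If `(T, τ)` is a terminal coalgebra and `t` is the (two-sided) inverse of `τ` provided
by Lambek's Lemma, then the algebra `(T, t)` is corecursive, and it is the initial
corecursive algebra: to every corecursive algebra there is a unique algebra homomorphism. -/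
theorem terminal_coalgebra_initial_corecursive (H : A ⥤ A)
    (T : Endofunctor.Coalgebra H) (hT : IsTerminal T)
    (t : H.obj T.V ⟶ T.V) (ht1 : T.str ≫ t = 𝟙 T.V) (ht2 : t ≫ T.str = 𝟙 (H.obj T.V)) :
    IsCorecursiveAlg H T.V t ∧
      ∀ (A₀ : A) (a : H.obj A₀ ⟶ A₀), IsCorecursiveAlg H A₀ a →
        ∃! h : T.V ⟶ A₀, t ≫ h = H.map h ≫ a := by
  have hcor : IsCorecursiveAlg H T.V t := by
    intro X e
    let f := hT.from ⟨X, e⟩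
    refine ⟨f.f, ?_, ?_⟩
    · have hf : f.f ≫ T.str = e ≫ H.map f.f := f.h.symm
      calc f.f = f.f ≫ T.str ≫ t := by rw [ht1, Category.comp_id]
        _ = (f.f ≫ T.str) ≫ t := by rw [Category.assoc]
        _ = e ≫ H.map f.f ≫ t := by rw [hf, Category.assoc]
    · intro s hs
      have key : e ≫ H.map s = s ≫ T.str := by
        symm
        calc s ≫ T.str = (e ≫ H.map s ≫ t) ≫ T.str := by rw [← hs]
          _ = e ≫ H.map s ≫ (t ≫ T.str) := by simp [Category.assoc]
          _ = e ≫ H.map s := by rw [ht2, Category.comp_id]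
      have := hT.hom_ext (Coalgebra.Hom.mk s key) f
      exact congrArg Coalgebra.Hom.f this
  refine ⟨hcor, ?_⟩
  intro A₀ a ha
  obtain ⟨h, hh, huniq⟩ := ha T.V T.str
  refine ⟨h, ?_, ?_⟩
  · calc t ≫ h = t ≫ T.str ≫ H.map h ≫ a := by rw [← hh]
      _ = (t ≫ T.str) ≫ H.map h ≫ a := by rw [Category.assoc]
      _ = H.map h ≫ a := by rw [ht2, Category.id_comp]
  · intro h' hh'
    apply huniq
    calc h' = (T.str ≫ t) ≫ h' := by rw [ht1, Category.id_comp]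
      _ = T.str ≫ t ≫ h' := by rw [Category.assoc]
      _ = T.str ≫ H.map h' ≫ a := by rw [hh']
end

section
/- Let H be a λ-accessible endofunctor of a locally λ-presentable category with λ uncountable. Then λ-filtered colimits of corecursive algebras, computed in Alg H (equivalently on the level of A), are again corecursive. -/
open CategoryTheory CategoryTheory.Limits CategoryTheory.Endofunctor

universe v u

/-- A category `J` is `κ`-filtered if every diagram with fewer than `κ` morphisms admits
a cocone. -/
def IsCardFiltered (J : Type v) [SmallCategory J] (κ : Cardinal.{v}) : Prop :=
  ∀ (K : Type v) [SmallCategory K], Cardinal.mk (Σ a b : K, a ⟶ b) < κ →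
    ∀ F : K ⥤ J, Nonempty (Limits.Cocone F)

variable {A : Type u} [Category.{v} A]

/-- A functor is `κ`-accessible if it preserves colimits of all `κ`-filtered shapes. -/
def PreservesCardFilteredColimits {B : Type*} [Category.{v} B] (F : A ⥤ B)
    (κ : Cardinal.{v}) : Prop :=
  ∀ (J : Type v) [SmallCategory J], IsCardFiltered J κ →
    Nonempty (PreservesColimitsOfShape J F)

/-- An object is `κ`-presentable if its hom-functor preserves `κ`-filtered colimits. -/
def IsCardPresentable (X : A) (κ : Cardinal.{v}) : Prop :=
  PreservesCardFilteredColimits (coyoneda.obj (Opposite.op X)) κ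

/-- `A` is locally `κ`-presentable: it is cocomplete and has a set of `κ`-presentable
objects such that every object is a `κ`-filtered colimit of objects from that set. -/
def LocallyCardPresentable (A : Type u) [Category.{v} A] (κ : Cardinal.{v}) : Prop :=
  HasColimits A ∧ ∃ S : Set A, (∀ X ∈ S, IsCardPresentable X κ) ∧
    ∀ X : A, ∃ (J : Type v) (_ : SmallCategory J), IsCardFiltered J κ ∧
      ∃ D : J ⥤ A, (∀ j, D.obj j ∈ S) ∧
        ∃ c : Limits.Cocone D, Nonempty (IsColimit c) ∧ Nonempty (c.pt ≅ X)

-- Auxiliary lemmas --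
section auxfilt
variable {J : Type v} [SmallCategory J] {κ : Cardinal.{v}}

lemma aux_small (K : Type v) [SmallCategory K] [Countable K]
    [Quiver.IsThin K] (hκ : Cardinal.aleph0 < κ) :
    Cardinal.mk (Σ a b : K, a ⟶ b) < κ := by
  have : ∀ a b : K, Countable (a ⟶ b) := fun a b => Subsingleton.to_countable
  have : Countable (Σ a b : K, a ⟶ b) := inferInstance
  exact lt_of_le_of_lt (Cardinal.mk_le_aleph0) hκ

lemma aux_fin (K : Type v) [SmallCategory K] [FinCategory K] (hκ : Cardinal.aleph0 < κ) :
    Cardinal.mk (Σ a b : K, a ⟶ b) < κ := by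
  have : Finite (Σ a b : K, a ⟶ b) := by
    have : ∀ a b : K, Finite (a ⟶ b) := fun a b => Finite.of_fintype _
    infer_instance
  exact lt_trans (Cardinal.lt_aleph0_of_finite _) hκ

lemma IsCardFiltered.nonempty (hκ : Cardinal.aleph0 < κ) (hJ : IsCardFiltered J κ) :
    Nonempty J := by
  obtain ⟨cc⟩ := hJ (Discrete PEmpty.{v+1}) (aux_small _ hκ) (Functor.empty J)
  exact ⟨cc.pt⟩

lemma IsCardFiltered.isFiltered (hκ : Cardinal.aleph0 < κ) (hJ : IsCardFiltered J κ) :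
    IsFiltered J :=
  IsFiltered.of_cocone_nonempty.{v} J fun F => hJ _ (aux_fin _ hκ) F

lemma IsCardFiltered.countable_bound (hκ : Cardinal.aleph0 < κ) (hJ : IsCardFiltered J κ)
    (ι : Type v) [Countable ι] (f : ι → J) : ∃ m : J, ∀ i, Nonempty (f i ⟶ m) := by
  obtain ⟨cc⟩ := hJ (Discrete ι) (aux_small _ hκ) (Discrete.functor f)
  exact ⟨cc.pt, fun i => ⟨cc.ι.app ⟨i⟩⟩⟩

lemma IsCardFiltered.wide_bound (hκ : Cardinal.aleph0 < κ) (hJ : IsCardFiltered J κ)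
    (ι : Type v) [Countable ι] (j : J) (k : ι → J) (w : ∀ i, j ⟶ k i) :
    ∃ (m : J) (v : j ⟶ m) (vi : ∀ i, k i ⟶ m), ∀ i, w i ≫ vi i = v := by
  have : Countable (WidePushoutShape ι) := by unfold WidePushoutShape; infer_instance
  obtain ⟨cc⟩ := hJ (WidePushoutShape ι) (aux_small _ hκ)
    (WidePushoutShape.wideSpan j k w)
  exact ⟨cc.pt, cc.ι.app none, fun i => cc.ι.app (some i),
    fun i => cc.w (WidePushoutShape.Hom.init i)⟩

lemma equalized_at_stage [IsFiltered J] (F : J ⥤ Type v)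
    {t : Limits.Cocone F} (ht : IsColimit t) {j : J} {x y : F.obj j}
    (h : t.ι.app j x = t.ι.app j y) : ∃ (k : J) (w : j ⟶ k), F.map w x = F.map w y := by
  rw [Types.FilteredColimit.isColimit_eq_iff F ht] at h
  obtain ⟨k, f, g, hfg⟩ := h
  refine ⟨_, f ≫ IsFiltered.coeqHom f g, ?_⟩
  have hco : f ≫ IsFiltered.coeqHom f g = g ≫ IsFiltered.coeqHom f g :=
    IsFiltered.coeq_condition f g
  calc F.map (f ≫ IsFiltered.coeqHom f g) x
      = F.map (IsFiltered.coeqHom f g) (F.map f x) := by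
        rw [FunctorToTypes.map_comp_apply]
    _ = F.map (IsFiltered.coeqHom f g) (F.map g y) := by rw [hfg]
    _ = F.map (g ≫ IsFiltered.coeqHom f g) y := by rw [FunctorToTypes.map_comp_apply]
    _ = F.map (f ≫ IsFiltered.coeqHom f g) y := by rw [hco]

end auxfilt

section carrier
variable {H : A ⥤ A} {J : Type v} [SmallCategory J]

lemma carrier_isColimit [HasColimits A] [PreservesColimitsOfShape J H]
    (D : J ⥤ Endofunctor.Algebra H) (c : Limits.Cocone D) (hc : IsColimit c) :
    Nonempty (IsColimit ((Endofunctor.Algebra.forget H).mapCocone c)) := by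
  set Dc := D ⋙ Endofunctor.Algebra.forget H with hDc
  have hH : IsColimit (H.mapCocone (colimit.cocone Dc)) :=
    isColimitOfPreserves H (colimit.isColimit Dc)
  let sc : Limits.Cocone (Dc ⋙ H) := Limits.Cocone.mk (colimit Dc)
    { app := fun j => (D.obj j).str ≫ colimit.ι Dc j
      naturality := fun i j f => by
        dsimp
        have hh : H.map (Dc.map f) ≫ (D.obj j).str = (D.obj i).str ≫ Dc.map f :=
          (D.map f).h
        rw [Category.comp_id]; erw [← Category.assoc, hh, Category.assoc, colimit.w Dc f] }
  let str : H.obj (colimit Dc) ⟶ colimit Dc := hH.desc sc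
  have hstr : ∀ j, H.map (colimit.ι Dc j) ≫ str = (D.obj j).str ≫ colimit.ι Dc j :=
    fun j => hH.fac sc j
  let Chat : Endofunctor.Algebra H := ⟨colimit Dc, str⟩
  let chat : Limits.Cocone D := Limits.Cocone.mk Chat
    { app := fun j => ⟨colimit.ι Dc j, hstr j⟩
      naturality := fun i j f => by
        ext
        show (D.map f).f ≫ colimit.ι Dc j = colimit.ι Dc i ≫ 𝟙 _
        rw [Category.comp_id]
        exact colimit.w Dc f }
  have hdesc : ∀ (s : Limits.Cocone D),
      H.map (colimit.desc Dc ((Endofunctor.Algebra.forget H).mapCocone s)) ≫ s.pt.str =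
        str ≫ colimit.desc Dc ((Endofunctor.Algebra.forget H).mapCocone s) := by
    intro s
    apply hH.hom_ext
    intro j
    have h1 : (H.mapCocone (colimit.cocone Dc)).ι.app j = H.map (colimit.ι Dc j) := rfl
    erw [← Category.assoc, ← Category.assoc, h1, ← H.map_comp]
    have h2 : colimit.ι Dc j ≫ colimit.desc Dc ((Endofunctor.Algebra.forget H).mapCocone s) =
        (s.ι.app j).f := colimit.ι_desc _ j
    have h3 : H.map (s.ι.app j).f ≫ s.pt.str = (D.obj j).str ≫ (s.ι.app j).f :=
      (s.ι.app j).h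
    erw [h2, h3, hstr j, Category.assoc, h2]
    rfl
  have hchat : IsColimit chat := by
    refine ⟨fun s => ⟨colimit.desc Dc ((Endofunctor.Algebra.forget H).mapCocone s), hdesc s⟩,
      fun s j => ?_, fun s m hm => ?_⟩
    · ext
      exact colimit.ι_desc ((Endofunctor.Algebra.forget H).mapCocone s) j
    · ext j
      show colimit.ι Dc j ≫ m.f =
        colimit.ι Dc j ≫ colimit.desc Dc ((Endofunctor.Algebra.forget H).mapCocone s)
      rw [colimit.ι_desc]
      exact congrArg Endofunctor.Algebra.Hom.f (hm j)
  let e : c ≅ chat := hc.uniqueUpToIso hchat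
  have : IsColimit ((Endofunctor.Algebra.forget H).mapCocone chat) := by
    refine IsColimit.ofIsoColimit (colimit.isColimit Dc) (Limits.Cocones.ext (Iso.refl _) ?_)
    intro j
    simp
    exact Category.comp_id _
  exact ⟨IsColimit.ofIsoColimit this
    ((Limits.Cocones.functoriality D (Endofunctor.Algebra.forget H)).mapIso e.symm)⟩

end carrier

/-- For a `λ`-accessible endofunctor on a locally `λ`-presentable category with `λ`
uncountable, `λ`-filtered colimits of corecursive algebras in `Alg H` are corecursive. -/
theorem filtered_colimit_of_corecursive_isCorecursive
    (H : A ⥤ A) (κ : Cardinal.{v}) (hκ : Cardinal.aleph0 < κ)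
    (hA : LocallyCardPresentable A κ) (hH : PreservesCardFilteredColimits H κ)
    (J : Type v) [SmallCategory J] (hJ : IsCardFiltered J κ)
    (D : J ⥤ Endofunctor.Algebra H) (hD : ∀ j, IsCorecursive (D.obj j))
    (c : Limits.Cocone D) (hc : IsColimit c) : IsCorecursive c.pt := by
  intro X e
  haveI : HasColimits A := hA.1
  haveI hJf : IsFiltered J := hJ.isFiltered hκ
  obtain ⟨j₀⟩ := hJ.nonempty hκ
  obtain ⟨instHJ⟩ := hH J hJ
  obtain ⟨hcc⟩ := carrier_isColimit D c hc
  -- Uniqueness of solutions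
  have uniq : ∀ s t : X ⟶ c.pt.a, s = e ≫ H.map s ≫ c.pt.str →
      t = e ≫ H.map t ≫ c.pt.str → s = t := by
    intro s t hs ht
    obtain ⟨-, S, hS, hdec⟩ := hA
    obtain ⟨P, instP, hP, D', hD'S, c', ⟨hc'⟩, ⟨φ⟩⟩ := hdec X
    haveI hPf : IsFiltered P := hP.isFiltered hκ
    obtain ⟨instHP⟩ := hH P hP
    have pres : ∀ p : P, IsCardPresentable (D'.obj p) κ := fun p => hS _ (hD'S p)
    set u : ∀ p : P, D'.obj p ⟶ X := fun p => c'.ι.app p ≫ φ.hom with hu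
    -- factor u p ≫ e through an H-stage
    have step : ∀ p : P, ∃ (q : P) (y : D'.obj p ⟶ H.obj (D'.obj q)),
        y ≫ H.map (u q) = u p ≫ e := by
      intro p
      obtain ⟨instpre⟩ := pres p P hP
      have hHc' : IsColimit (H.mapCocone c') := isColimitOfPreserves H hc'
      have hco : IsColimit ((coyoneda.obj (Opposite.op (D'.obj p))).mapCocone (H.mapCocone c')) :=
        isColimitOfPreserves _ hHc'
      obtain ⟨q, y, hy⟩ := Types.jointly_surjective _ hco (u p ≫ e ≫ H.map φ.inv)
      refine ⟨q, y, ?_⟩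
      have hy' : y ≫ H.map (c'.ι.app q) = u p ≫ e ≫ H.map φ.inv := hy
      have : (y ≫ H.map (c'.ι.app q)) ≫ H.map φ.hom =
          (u p ≫ e ≫ H.map φ.inv) ≫ H.map φ.hom := by rw [hy']
      simp only [Category.assoc, ← H.map_comp, Iso.inv_hom_id, H.map_id,
        Category.comp_id] at this
      simpa [hu, H.map_comp] using this
    choose nxt yy hyy using step
    -- it suffices to check equality on the colimit legs of X
    have key : ∀ p₀ : P, u p₀ ≫ s = u p₀ ≫ t := by
      intro p₀
      let sq : ℕ → P := fun n => Nat.rec p₀ (fun _ p => nxt p) n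
      let E : ∀ n : ℕ, D'.obj (sq n) ⟶ H.obj (D'.obj (sq (n+1))) := fun n => yy (sq n)
      have hE : ∀ n, E n ≫ H.map (u (sq (n+1))) = u (sq n) ≫ e := fun n => hyy (sq n)
      -- factor maps into the algebra colimit through stages
      have fact : ∀ (n : ℕ) (g : D'.obj (sq n) ⟶ c.pt.a),
          ∃ (j : J) (σ : D'.obj (sq n) ⟶ (D.obj j).a), σ ≫ (c.ι.app j).f = g := by
        intro n g
        obtain ⟨instpre⟩ := pres (sq n) J hJ
        have hco : IsColimit ((coyoneda.obj (Opposite.op (D'.obj (sq n)))).mapCocone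
            ((Endofunctor.Algebra.forget H).mapCocone c)) := isColimitOfPreserves _ hcc
        obtain ⟨j, σ, hσ⟩ := Types.jointly_surjective _ hco g
        exact ⟨j, σ, hσ⟩
      choose rs σs hσs using fun n => fact n (u (sq n) ≫ s)
      choose rt σt hσt using fun n => fact n (u (sq n) ≫ t)
      -- bound all stages
      obtain ⟨jstar, hjs'⟩ := hJ.countable_bound hκ (ULift.{v} (ℕ × Bool))
        (fun i => cond i.down.2 (rs i.down.1) (rt i.down.1))
      have hjs : ∀ i : ℕ × Bool, Nonempty ((cond i.2 (rs i.1) (rt i.1)) ⟶ jstar) :=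
        fun i => hjs' (ULift.up i)
      let σS : ∀ n : ℕ, D'.obj (sq n) ⟶ (D.obj jstar).a :=
        fun n => σs n ≫ (D.map (hjs (n, true)).some).f
      let σT : ∀ n : ℕ, D'.obj (sq n) ⟶ (D.obj jstar).a :=
        fun n => σt n ≫ (D.map (hjs (n, false)).some).f
      have hσS : ∀ n, σS n ≫ (c.ι.app jstar).f = u (sq n) ≫ s := by
        intro n
        have hw : (D.map (hjs (n, true)).some).f ≫ (c.ι.app jstar).f =
            (c.ι.app (rs n)).f := congrArg Endofunctor.Algebra.Hom.f (c.w (hjs (n, true)).some)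
        rw [show σS n = σs n ≫ (D.map (hjs (n, true)).some).f from rfl, Category.assoc, hw,
          hσs n]
      have hσT : ∀ n, σT n ≫ (c.ι.app jstar).f = u (sq n) ≫ t := by
        intro n
        have hw : (D.map (hjs (n, false)).some).f ≫ (c.ι.app jstar).f =
            (c.ι.app (rt n)).f := congrArg Endofunctor.Algebra.Hom.f (c.w (hjs (n, false)).some)
        rw [show σT n = σt n ≫ (D.map (hjs (n, false)).some).f from rfl, Category.assoc, hw,
          hσt n]
      -- the fixed point equations hold after composing with the colimit leg
      have hstep : ∀ (v : X ⟶ c.pt.a) (σV : ∀ n : ℕ, D'.obj (sq n) ⟶ (D.obj jstar).a),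
          v = e ≫ H.map v ≫ c.pt.str →
          (∀ n, σV n ≫ (c.ι.app jstar).f = u (sq n) ≫ v) →
          ∀ n, σV n ≫ (c.ι.app jstar).f =
            (E n ≫ H.map (σV (n+1)) ≫ (D.obj jstar).str) ≫ (c.ι.app jstar).f := by
        intro v σV hv hσV n
        have hh : H.map ((c.ι.app jstar).f) ≫ c.pt.str =
            (D.obj jstar).str ≫ (c.ι.app jstar).f := (c.ι.app jstar).h
        calc σV n ≫ (c.ι.app jstar).f = u (sq n) ≫ v := hσV n
          _ = u (sq n) ≫ e ≫ H.map v ≫ c.pt.str := by rw [← hv]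
          _ = (E n ≫ H.map (u (sq (n+1)))) ≫ H.map v ≫ c.pt.str := by
              rw [← Category.assoc, hE n, Category.assoc]
          _ = E n ≫ H.map (u (sq (n+1)) ≫ v) ≫ c.pt.str := by
              rw [H.map_comp (u (sq (n+1))) v]; simp only [Category.assoc]
          _ = E n ≫ H.map (σV (n+1) ≫ (c.ι.app jstar).f) ≫ c.pt.str := by rw [← hσV (n+1)]
          _ = E n ≫ H.map (σV (n+1)) ≫ H.map ((c.ι.app jstar).f) ≫ c.pt.str := by
              rw [H.map_comp (σV (n+1)) ((c.ι.app jstar).f)]; simp only [Category.assoc]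
          _ = E n ≫ H.map (σV (n+1)) ≫ (D.obj jstar).str ≫ (c.ι.app jstar).f := by rw [hh]
          _ = (E n ≫ H.map (σV (n+1)) ≫ (D.obj jstar).str) ≫ (c.ι.app jstar).f := by
              simp only [Category.assoc]
      -- equalize at a later stage
      have equ : ∀ (n : ℕ) (x y : D'.obj (sq n) ⟶ (D.obj jstar).a),
          x ≫ (c.ι.app jstar).f = y ≫ (c.ι.app jstar).f →
          ∃ (k : J) (w : jstar ⟶ k), x ≫ (D.map w).f = y ≫ (D.map w).f := by
        intro n x y hxy
        obtain ⟨instpre⟩ := pres (sq n) J hJ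
        have hco : IsColimit ((coyoneda.obj (Opposite.op (D'.obj (sq n)))).mapCocone
            ((Endofunctor.Algebra.forget H).mapCocone c)) := isColimitOfPreserves _ hcc
        obtain ⟨k, w, hw⟩ := equalized_at_stage
          ((D ⋙ Endofunctor.Algebra.forget H) ⋙ coyoneda.obj (Opposite.op (D'.obj (sq n))))
          hco (j := jstar) (x := x) (y := y) hxy
        exact ⟨k, w, hw⟩
      choose kS wS hwS using fun n => equ n (σS n)
        (E n ≫ H.map (σS (n+1)) ≫ (D.obj jstar).str) (hstep s σS hs hσS n)
      choose kT wT hwT using fun n => equ n (σT n)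
        (E n ≫ H.map (σT (n+1)) ≫ (D.obj jstar).str) (hstep t σT ht hσT n)
      obtain ⟨m, v, vi', hvi'⟩ := hJ.wide_bound hκ (ULift.{v} (ℕ × Bool)) jstar
        (fun i => cond i.down.2 (kS i.down.1) (kT i.down.1))
        (fun i => Bool.casesOn
          (motive := fun b => jstar ⟶ cond b (kS i.down.1) (kT i.down.1))
          i.down.2 (wT i.down.1) (wS i.down.1))
      have hviS : ∀ n : ℕ, wS n ≫ vi' (ULift.up (n, true)) = v :=
        fun n => hvi' (ULift.up (n, true))
      have hviT : ∀ n : ℕ, wT n ≫ vi' (ULift.up (n, false)) = v :=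
        fun n => hvi' (ULift.up (n, false))
      let d : (D.obj jstar).a ⟶ (D.obj m).a := (D.map v).f
      have hd : H.map d ≫ (D.obj m).str = (D.obj jstar).str ≫ d := (D.map v).h
      let shat : ∀ n : ℕ, D'.obj (sq n) ⟶ (D.obj m).a := fun n => σS n ≫ d
      let that : ∀ n : ℕ, D'.obj (sq n) ⟶ (D.obj m).a := fun n => σT n ≫ d
      have hcomp : ∀ {k : J} (w : jstar ⟶ k) (vk : k ⟶ m), w ≫ vk = v →
          (D.map w).f ≫ (D.map vk).f = d := by
        intro k w vk hwv
        rw [show (D.map w).f ≫ (D.map vk).f = (D.map w ≫ D.map vk).f from rfl, ← D.map_comp,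
          hwv]
      have hshat : ∀ n, shat n = E n ≫ H.map (shat (n+1)) ≫ (D.obj m).str := by
        intro n
        have h1 : σS n ≫ (D.map (wS n)).f ≫ (D.map (vi' (ULift.up (n, true)))).f =
            (E n ≫ H.map (σS (n+1)) ≫ (D.obj jstar).str) ≫
              (D.map (wS n)).f ≫ (D.map (vi' (ULift.up (n, true)))).f := by
          rw [← Category.assoc, hwS n, Category.assoc]
        rw [hcomp (wS n) _ (hviS n)] at h1
        calc shat n = σS n ≫ d := rfl
          _ = (E n ≫ H.map (σS (n+1)) ≫ (D.obj jstar).str) ≫ d := h1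
          _ = E n ≫ H.map (σS (n+1)) ≫ (D.obj jstar).str ≫ d := by
              simp only [Category.assoc]
          _ = E n ≫ H.map (σS (n+1)) ≫ H.map d ≫ (D.obj m).str := by rw [hd]
          _ = E n ≫ H.map (σS (n+1) ≫ d) ≫ (D.obj m).str := by
              rw [H.map_comp (σS (n+1)) d]; simp only [Category.assoc]
      have hthat : ∀ n, that n = E n ≫ H.map (that (n+1)) ≫ (D.obj m).str := by
        intro n
        have h1 : σT n ≫ (D.map (wT n)).f ≫ (D.map (vi' (ULift.up (n, false)))).f =
            (E n ≫ H.map (σT (n+1)) ≫ (D.obj jstar).str) ≫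
              (D.map (wT n)).f ≫ (D.map (vi' (ULift.up (n, false)))).f := by
          rw [← Category.assoc, hwT n, Category.assoc]
        rw [hcomp (wT n) _ (hviT n)] at h1
        calc that n = σT n ≫ d := rfl
          _ = (E n ≫ H.map (σT (n+1)) ≫ (D.obj jstar).str) ≫ d := h1
          _ = E n ≫ H.map (σT (n+1)) ≫ (D.obj jstar).str ≫ d := by
              simp only [Category.assoc]
          _ = E n ≫ H.map (σT (n+1)) ≫ H.map d ≫ (D.obj m).str := by rw [hd]
          _ = E n ≫ H.map (σT (n+1) ≫ d) ≫ (D.obj m).str := by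
              rw [H.map_comp (σT (n+1)) d]; simp only [Category.assoc]
      -- the coalgebra on the countable coproduct
      let Y : A := ∐ fun n : ULift.{v} ℕ => D'.obj (sq n.down)
      let inc : ∀ n : ℕ, D'.obj (sq n) ⟶ Y := fun n =>
        Sigma.ι (fun n : ULift.{v} ℕ => D'.obj (sq n.down)) (ULift.up n)
      let ehat : Y ⟶ H.obj Y := Sigma.desc fun n => E n.down ≫ H.map (inc (n.down+1))
      have hsolve : ∀ (σV : ∀ n : ℕ, D'.obj (sq n) ⟶ (D.obj m).a),
          (∀ n, σV n = E n ≫ H.map (σV (n+1)) ≫ (D.obj m).str) →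
          Sigma.desc (fun n : ULift.{v} ℕ => σV n.down) =
            ehat ≫ H.map (Sigma.desc (fun n : ULift.{v} ℕ => σV n.down)) ≫ (D.obj m).str := by
        intro σV hσV
        apply Sigma.hom_ext
        intro n'
        obtain ⟨n⟩ := n'
        rw [colimit.ι_desc]
        show σV n = inc n ≫ ehat ≫ H.map (Sigma.desc (fun n : ULift.{v} ℕ => σV n.down)) ≫
          (D.obj m).str
        have h1 : inc n ≫ ehat = E n ≫ H.map (inc (n+1)) := by
          simp [inc, ehat]
        rw [← Category.assoc, h1, Category.assoc, ← Category.assoc (H.map (inc (n+1))),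
          ← H.map_comp]
        have h2 : inc (n+1) ≫ Sigma.desc (fun n : ULift.{v} ℕ => σV n.down) = σV (n+1) := by
          simp [inc]
        rw [h2, ← Category.assoc, hσV n, Category.assoc]
      obtain ⟨sol, -, hsol⟩ := hD m Y ehat
      have hmain : Sigma.desc (fun n : ULift.{v} ℕ => shat n.down) =
          Sigma.desc (fun n : ULift.{v} ℕ => that n.down) := by
        rw [hsol _ (hsolve shat hshat), hsol _ (hsolve that hthat)]
      have h0 : shat 0 = that 0 := by
        have := congrArg (fun f => inc 0 ≫ f) hmain
        simpa [inc] using this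
      -- conclude
      have hlegS : shat 0 ≫ (c.ι.app m).f = u p₀ ≫ s := by
        have hw : d ≫ (c.ι.app m).f = (c.ι.app jstar).f :=
          congrArg Endofunctor.Algebra.Hom.f (c.w v)
        calc shat 0 ≫ (c.ι.app m).f = σS 0 ≫ d ≫ (c.ι.app m).f := by
              simp only [shat, Category.assoc]
          _ = σS 0 ≫ (c.ι.app jstar).f := by rw [hw]
          _ = u p₀ ≫ s := hσS 0
      have hlegT : that 0 ≫ (c.ι.app m).f = u p₀ ≫ t := by
        have hw : d ≫ (c.ι.app m).f = (c.ι.app jstar).f :=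
          congrArg Endofunctor.Algebra.Hom.f (c.w v)
        calc that 0 ≫ (c.ι.app m).f = σT 0 ≫ d ≫ (c.ι.app m).f := by
              simp only [that, Category.assoc]
          _ = σT 0 ≫ (c.ι.app jstar).f := by rw [hw]
          _ = u p₀ ≫ t := hσT 0
      rw [← hlegS, ← hlegT, h0]
    have : φ.hom ≫ s = φ.hom ≫ t := by
      apply hc'.hom_ext
      intro p
      have := key p
      simpa [hu, Category.assoc] using this
    exact (Iso.cancel_iso_hom_left φ s t).mp this
  -- Existence
  obtain ⟨s₀, hs₀, -⟩ := hD j₀ X e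
  have hfix : s₀ ≫ (c.ι.app j₀).f = e ≫ H.map (s₀ ≫ (c.ι.app j₀).f) ≫ c.pt.str := by
    have hh : H.map ((c.ι.app j₀).f) ≫ c.pt.str =
        (D.obj j₀).str ≫ (c.ι.app j₀).f := (c.ι.app j₀).h
    calc s₀ ≫ (c.ι.app j₀).f = (e ≫ H.map s₀ ≫ (D.obj j₀).str) ≫ (c.ι.app j₀).f := by
          rw [← hs₀]
      _ = e ≫ H.map s₀ ≫ (D.obj j₀).str ≫ (c.ι.app j₀).f := by simp only [Category.assoc]
      _ = e ≫ H.map s₀ ≫ H.map ((c.ι.app j₀).f) ≫ c.pt.str := by rw [hh]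
      _ = e ≫ H.map (s₀ ≫ (c.ι.app j₀).f) ≫ c.pt.str := by
          rw [H.map_comp s₀ ((c.ι.app j₀).f)]; simp only [Category.assoc]
  exact ⟨s₀ ≫ (c.ι.app j₀).f, hfix, fun y hy => uniq y _ hy hfix⟩
end

section
/- Let (T, τ) be a terminal coalgebra for H. The category of Bloom algebras for H (with solution-preserving homomorphisms) is isomorphic to the slice category (T, τ⁻¹)/Alg H of H-algebras under the algebra (T, τ⁻¹). -/
open CategoryTheory CategoryTheory.Limits CategoryTheory.Endofunctor

universe v u

variable {A : Type u} [Category.{v} A]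

/-- A Bloom algebra: an `H`-algebra together with a functorial solution operation. -/
structure BloomAlg (H : A ⥤ A) where
  a : A
  str : H.obj a ⟶ a
  sol : ∀ X : Endofunctor.Coalgebra H, X.V ⟶ a
  isSol : ∀ X : Endofunctor.Coalgebra H, sol X = X.str ≫ H.map (sol X) ≫ str
  functorial : ∀ (X Y : Endofunctor.Coalgebra H) (h : X ⟶ Y), h.f ≫ sol Y = sol X

/-- A homomorphism of Bloom algebras: a solution-preserving algebra homomorphism. -/
@[ext]
structure BloomHom {H : A ⥤ A} (B C : BloomAlg H) where
  f : B.a ⟶ C.a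
  hom : B.str ≫ f = H.map f ≫ C.str
  pres : ∀ X : Endofunctor.Coalgebra H, B.sol X ≫ f = C.sol X

instance {H : A ⥤ A} : Category (BloomAlg H) where
  Hom := BloomHom
  id B := ⟨𝟙 _, by simp, fun X => by simp⟩
  comp {B C D} f g := ⟨f.f ≫ g.f,
    by rw [← Category.assoc, f.hom, Category.assoc, g.hom, H.map_comp, Category.assoc],
    fun X => by rw [← Category.assoc, f.pres, g.pres]⟩
  id_comp f := by apply BloomHom.ext; simp
  comp_id f := by apply BloomHom.ext; simp
  assoc f g h := by apply BloomHom.ext; simp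

section Aux

variable (H : A ⥤ A) (T : Endofunctor.Coalgebra H) (hT : IsTerminal T)
  (t : H.obj T.V ⟶ T.V) (ht1 : T.str ≫ t = 𝟙 T.V) (ht2 : t ≫ T.str = 𝟙 (H.obj T.V))

@[simp] lemma BloomHom_eqToHom_f {Hh : A ⥤ A} {B C : BloomAlg Hh} (h : B = C) :
    (eqToHom h : B ⟶ C).f = eqToHom (congrArg BloomAlg.a h) := by
  cases h; rfl

@[simp] lemma BloomHom_comp_f {Hh : A ⥤ A} {B C D : BloomAlg Hh} (f : B ⟶ C) (g : C ⟶ D) :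
    (f ≫ g).f = f.f ≫ g.f := rfl

@[simp] lemma BloomHom_id_f {Hh : A ⥤ A} (B : BloomAlg Hh) : (𝟙 B : B ⟶ B).f = 𝟙 B.a := rfl

def Fto : BloomAlg H ⥤ Under (Endofunctor.Algebra.mk T.V t) where
  obj B := Under.mk (Y := Endofunctor.Algebra.mk B.a B.str)
    { f := B.sol T
      h := by
        have := B.isSol T
        rw [show (Endofunctor.Algebra.mk T.V t).str = t from rfl]
        calc H.map (B.sol T) ≫ B.str
            = (t ≫ T.str) ≫ H.map (B.sol T) ≫ B.str := by rw [ht2]; simp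
          _ = t ≫ B.sol T := by rw [Category.assoc, ← B.isSol T] }
  map {B C} f := Under.homMk
    { f := f.f
      h := by simpa using f.hom.symm }
    (by ext; exact f.pres T)
  map_id B := by apply CommaMorphism.ext <;> simp <;> rfl
  map_comp f g := by apply CommaMorphism.ext <;> simp <;> rfl

def Gto : Under (Endofunctor.Algebra.mk T.V t) ⥤ BloomAlg H where
  obj u :=
    { a := u.right.a
      str := u.right.str
      sol := fun X => (hT.from X).f ≫ u.hom.f
      isSol := fun X => by
        have hc : X.str ≫ H.map (hT.from X).f = (hT.from X).f ≫ T.str := (hT.from X).h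
        have ha : H.map u.hom.f ≫ u.right.str = t ≫ u.hom.f := u.hom.h
        rw [H.map_comp, Category.assoc, ha]
        slice_rhs 1 2 => rw [hc]
        slice_rhs 2 3 => rw [ht1]
        simp
      functorial := fun X Y h => by
        rw [← Category.assoc]
        congr 1
        have : h ≫ hT.from Y = hT.from X := hT.hom_ext _ _
        calc h.f ≫ (hT.from Y).f = (h ≫ hT.from Y).f := rfl
          _ = (hT.from X).f := by rw [this] }
  map {u v} m :=
    { f := m.right.f
      hom := by simpa using m.right.h.symm
      pres := fun X => by
        have : u.hom ≫ m.right = v.hom := by simpa using m.w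
        simp only [Category.assoc]
        rw [show u.hom.f ≫ m.right.f = (u.hom ≫ m.right).f from rfl, this] }
  map_id u := by apply BloomHom.ext; rfl
  map_comp f g := by apply BloomHom.ext; rfl

lemma from_T_eq : hT.from T = 𝟙 T := hT.hom_ext _ _

end Aux

/-- The category of Bloom algebras for `H` is isomorphic to the slice category
`(T, τ⁻¹)/Alg H` under the terminal-coalgebra algebra. -/
theorem bloomAlg_iso_under_terminal_coalgebra (H : A ⥤ A)
    (T : Endofunctor.Coalgebra H) (hT : IsTerminal T)
    (t : H.obj T.V ⟶ T.V) (ht1 : T.str ≫ t = 𝟙 T.V) (ht2 : t ≫ T.str = 𝟙 (H.obj T.V)) :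
    ∃ (F : BloomAlg H ⥤ Under (Endofunctor.Algebra.mk T.V t))
      (G : Under (Endofunctor.Algebra.mk T.V t) ⥤ BloomAlg H),
      F ⋙ G = 𝟭 (BloomAlg H) ∧ G ⋙ F = 𝟭 (Under (Endofunctor.Algebra.mk T.V t)) := by
  
  refine ⟨Fto H T t ht2, Gto H T hT t ht1, ?_, ?_⟩
  · have hobj : ∀ B, (Fto H T t ht2 ⋙ Gto H T hT t ht1).obj B = (𝟭 (BloomAlg H)).obj B := by
      intro B
      cases B with
      | mk a str sol isSol functorial =>
        have hs : (fun X => (hT.from X).f ≫ sol T) = sol := by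
          funext X; exact functorial X T (hT.from X)
        simp [Fto, Gto, hs]
    refine CategoryTheory.Functor.ext hobj (fun B C f => ?_)
    apply BloomHom.ext
    simp only [Functor.comp_map, Functor.id_map, BloomHom_comp_f, BloomHom_eqToHom_f]
    simp [Fto, Gto]
    exact (Category.id_comp _).symm
  · have hf : (hT.from T).f = 𝟙 T.V := congrArg Endofunctor.Coalgebra.Hom.f (from_T_eq H T hT)
    have hobj : ∀ u, (Gto H T hT t ht1 ⋙ Fto H T t ht2).obj u
        = (𝟭 (Under (Endofunctor.Algebra.mk T.V t))).obj u := by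
      intro u
      obtain ⟨⟨⟨⟩⟩, r, hom⟩ := u
      have key : ((Gto H T hT t ht1 ⋙ Fto H T t ht2).obj
          ((Comma.mk ⟨⟨⟩⟩ r hom))).hom = hom := by
        ext; simp [Fto, Gto, hf]
      calc (Gto H T hT t ht1 ⋙ Fto H T t ht2).obj ((Comma.mk ⟨⟨⟩⟩ r hom))
          = Comma.mk ⟨⟨⟩⟩ r ((Gto H T hT t ht1 ⋙ Fto H T t ht2).obj
              ((Comma.mk ⟨⟨⟩⟩ r hom))).hom := rfl
        _ = (Comma.mk ⟨⟨⟩⟩ r hom) := by rw [key]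
    refine CategoryTheory.Functor.ext hobj (fun u v m => ?_)
    apply CommaMorphism.ext
    · apply Subsingleton.elim
    · ext
      simp only [Functor.comp_map, Functor.id_map, Under.comp_right, Under.eqToHom_right, Endofunctor.Algebra.comp_f]
      exact (Category.comp_id _).symm.trans (Category.id_comp _).symm
end

section
/- A unary algebra a : A → A in a category with terminal object 1 (an algebra for H = Id) carries a Bloom algebra structure if and only if a has a fixpoint, i.e., a morphism t : 1 → A with a ∘ t = t. Given a fixpoint t, a Bloom structure is defined by e† = t ∘ ! : X → A for every e : X → X; conversely, given a Bloom structure, id₁† : 1 → A is a fixpoint of a. -/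
open CategoryTheory CategoryTheory.Limits

universe v u

variable {A : Type u} [Category.{v} A]

/-- A Bloom algebra structure on an `H`-algebra `(A₀, a)`: a functorial solution operation. -/
structure BloomStructure (H : A ⥤ A) (A₀ : A) (a : H.obj A₀ ⟶ A₀) where
  sol : ∀ X : A, (X ⟶ H.obj X) → (X ⟶ A₀)
  isSol : ∀ (X : A) (e : X ⟶ H.obj X), sol X e = e ≫ H.map (sol X e) ≫ a
  functorial : ∀ (X Y : A) (e : X ⟶ H.obj X) (f : Y ⟶ H.obj Y) (h : X ⟶ Y),
    e ≫ H.map h = h ≫ f → h ≫ sol Y f = sol X e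

/-- A unary algebra `a : A₀ ⟶ A₀` carries a Bloom structure iff `a` has a fixpoint
`t : 1 ⟶ A₀` with `a ∘ t = t`. Given a fixpoint `t`, `e† = t ∘ !` defines a Bloom
structure; conversely, `(id 1)†` is a fixpoint of `a`. -/
theorem unary_bloom_iff_fixpoint [HasTerminal A] (A₀ : A) (a : A₀ ⟶ A₀) :
    (Nonempty (BloomStructure (Functor.id A) A₀ a) ↔ ∃ t : ⊤_ A ⟶ A₀, t ≫ a = t)
    ∧ (∀ t : ⊤_ A ⟶ A₀, t ≫ a = t →
        ∃ B : BloomStructure (Functor.id A) A₀ a,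
          ∀ (X : A) (e : X ⟶ X), B.sol X e = terminal.from X ≫ t)
    ∧ (∀ B : BloomStructure (Functor.id A) A₀ a,
        B.sol (⊤_ A) (𝟙 (⊤_ A)) ≫ a = B.sol (⊤_ A) (𝟙 (⊤_ A))) := by
  have fix : ∀ B : BloomStructure (Functor.id A) A₀ a,
      B.sol (⊤_ A) (𝟙 (⊤_ A)) ≫ a = B.sol (⊤_ A) (𝟙 (⊤_ A)) := by
    intro B
    conv_rhs => rw [B.isSol]
    simp
  have mk : ∀ t : ⊤_ A ⟶ A₀, t ≫ a = t →
      ∃ B : BloomStructure (Functor.id A) A₀ a,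
        ∀ (X : A) (e : X ⟶ X), B.sol X e = terminal.from X ≫ t := by
    intro t ht
    refine ⟨⟨fun X _ => terminal.from X ≫ t, ?_, ?_⟩, fun X e => rfl⟩
    · intro X e
      simp [Category.assoc, ht, terminal.comp_from]
    · intro X Y e f h _
      simp only [← Category.assoc, terminal.comp_from]
  refine ⟨⟨fun ⟨B⟩ => ⟨B.sol (⊤_ A) (𝟙 (⊤_ A)), fix B⟩,
    fun ⟨t, ht⟩ => ⟨(mk t ht).choose⟩⟩, mk, fix⟩
end

section
/- An initial Bloom algebra for H is precisely a terminal H-coalgebra: if (T,τ) is terminal in Coalg H then (T, τ⁻¹) with the canonical solution operation is initial in the category of Bloom algebras, and conversely the underlying algebra of an initial Bloom algebra has invertible structure yielding a terminal coalgebra. -/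
open CategoryTheory CategoryTheory.Limits CategoryTheory.Endofunctor

universe v u

variable {A : Type u} [Category.{v} A]

/-- The terminal coalgebra, regarded as an algebra via the inverse `t` of its structure map,
with the canonical solution operation sending a coalgebra to the unique coalgebra
homomorphism into `T`. -/
def canonicalBloom (H : A ⥤ A) (T : Endofunctor.Coalgebra H) (hT : IsTerminal T)
    (t : H.obj T.V ⟶ T.V) (ht1 : T.str ≫ t = 𝟙 T.V) : BloomAlg H where
  a := T.V
  str := t
  sol X := (hT.from X).f
  isSol X := by
    rw [← Category.assoc, (hT.from X).h, Category.assoc, ht1, Category.comp_id]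
  functorial X Y h :=
    congrArg Endofunctor.Coalgebra.Hom.f (hT.hom_ext (h ≫ hT.from Y) (hT.from X))

/-- An initial Bloom algebra is precisely a terminal coalgebra: the terminal coalgebra with
its canonical solution operation is initial among Bloom algebras, and conversely the
structure map of an initial Bloom algebra is invertible and its inverse yields a terminal
coalgebra. -/
theorem initial_bloom_iff_terminal_coalgebra (H : A ⥤ A) :
    (∀ (T : Endofunctor.Coalgebra H) (hT : IsTerminal T)
        (t : H.obj T.V ⟶ T.V) (ht1 : T.str ≫ t = 𝟙 T.V) (_ : t ≫ T.str = 𝟙 (H.obj T.V)),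
        Nonempty (IsInitial (canonicalBloom H T hT t ht1)))
    ∧ (∀ B : BloomAlg H, Nonempty (IsInitial B) →
        ∃ s : B.a ⟶ H.obj B.a, B.str ≫ s = 𝟙 (H.obj B.a) ∧ s ≫ B.str = 𝟙 B.a ∧
          Nonempty (IsTerminal (Endofunctor.Coalgebra.mk B.a s))) := by
  constructor
  · intro T hT t ht1 ht2
    refine ⟨IsInitial.ofUniqueHom (fun B => ⟨B.sol T, ?_, ?_⟩) ?_⟩
    · show t ≫ B.sol T = H.map (B.sol T) ≫ B.str
      conv_lhs => rw [B.isSol T, ← Category.assoc, ht2, Category.id_comp]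
    · intro X
      exact B.functorial X T (hT.from X)
    · intro B m
      have h1 : (canonicalBloom H T hT t ht1).sol T = 𝟙 T.V := by
        have := hT.hom_ext (hT.from T) (𝟙 T)
        show (hT.from T).f = 𝟙 T.V
        rw [this]; rfl
      apply BloomHom.ext
      have := m.pres T
      simp only [h1] at this
      exact (Category.id_comp _).symm.trans this
  · intro B ⟨hB⟩
    -- Bloom algebra structure on H.obj B.a
    let C : BloomAlg H :=
      { a := H.obj B.a
        str := H.map B.str
        sol := fun X => X.str ≫ H.map (B.sol X)
        isSol := fun X => by
          show X.str ≫ H.map (B.sol X) =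
            X.str ≫ H.map (X.str ≫ H.map (B.sol X)) ≫ H.map B.str
          rw [← H.map_comp, Category.assoc, ← B.isSol X]
        functorial := fun X Y h => by
          rw [← Category.assoc, ← h.h, Category.assoc, ← H.map_comp, B.functorial X Y h] }
    let p : C ⟶ B := ⟨B.str, rfl, fun X => by
      show (X.str ≫ H.map (B.sol X)) ≫ B.str = B.sol X
      rw [Category.assoc, ← B.isSol X]⟩
    let u : B ⟶ C := hB.to C
    have hup : u ≫ p = 𝟙 B := hB.hom_ext _ _
    have hsB : u.f ≫ B.str = 𝟙 B.a := congrArg BloomHom.f hup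
    have hBs : B.str ≫ u.f = 𝟙 (H.obj B.a) := by
      have := u.hom
      rw [this]
      show H.map u.f ≫ H.map B.str = _
      rw [← H.map_comp, hsB, H.map_id]
    refine ⟨u.f, hBs, hsB, ?_⟩
    set T' : Endofunctor.Coalgebra H := Endofunctor.Coalgebra.mk B.a u.f with hT'
    have solhom : ∀ X : Endofunctor.Coalgebra H, X.str ≫ H.map (B.sol X) = B.sol X ≫ u.f := by
      intro X
      conv_rhs => rw [B.isSol X]
      rw [Category.assoc, Category.assoc, hBs, Category.comp_id]
    have hsolT : B.sol T' = 𝟙 B.a := by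
      let e : B ⟶ B :=
        ⟨B.sol T', by
            conv_lhs => rw [B.isSol T']
            rw [← Category.assoc, ← Category.assoc, hBs, Category.id_comp],
          fun X => B.functorial X T' ⟨B.sol X, solhom X⟩⟩
      have h2 : e = 𝟙 B := hB.hom_ext _ _
      exact congrArg BloomHom.f h2
    refine ⟨IsTerminal.ofUniqueHom (fun X => ⟨B.sol X, solhom X⟩) ?_⟩
    intro X m
    have := B.functorial X T' m
    rw [hsolT, Category.comp_id] at this
    exact Endofunctor.Coalgebra.Hom.ext this
end

section
/- If (A, a, †) is a Bloom algebra and h : (A,a) → (B,b) is an H-algebra homomorphism, then there is a unique Bloom algebra structure ‡ on (B,b) such that h is solution-preserving; it is given by e‡ = h ∘ e† for every coalgebra e : X → HX. -/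
open CategoryTheory

universe v u

variable {A : Type u} [Category.{v} A]

/-- A Bloom structure transports along algebra homomorphisms: given a Bloom algebra
`(A₀, a, †)` and an algebra homomorphism `h : (A₀,a) ⟶ (B₀,b)`, there is a unique Bloom
structure `‡` on `(B₀, b)` making `h` solution-preserving, namely `e‡ = e† ≫ h`. -/
theorem bloom_structure_induced_by_hom (H : A ⥤ A)
    (A₀ B₀ : A) (a : H.obj A₀ ⟶ A₀) (b : H.obj B₀ ⟶ B₀)
    (Bs : BloomStructure H A₀ a)
    (h : A₀ ⟶ B₀) (hhom : a ≫ h = H.map h ≫ b) :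
    ∃ C : BloomStructure H B₀ b,
      (∀ (X : A) (e : X ⟶ H.obj X), C.sol X e = Bs.sol X e ≫ h) ∧
      ∀ C' : BloomStructure H B₀ b,
        (∀ (X : A) (e : X ⟶ H.obj X), Bs.sol X e ≫ h = C'.sol X e) →
        ∀ (X : A) (e : X ⟶ H.obj X), C'.sol X e = C.sol X e := by
  refine ⟨⟨fun X e => Bs.sol X e ≫ h, ?_, ?_⟩, fun X e => rfl, ?_⟩
  · intro X e
    show Bs.sol X e ≫ h = _
    conv_lhs => rw [Bs.isSol X e]
    simp [hhom]
  · intro X Y e f g hcomm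
    rw [← Category.assoc, Bs.functorial X Y e f g hcomm]
  · intro C' hC' X e
    exact (hC' X e).symm
end

section
/- Suppose H has a terminal coalgebra (T, τ), a free H-algebra FY on Y with universal arrow η : Y → FY, and the coproduct T ⊕ FY exists in Alg H. Then T ⊕ FY, equipped with the Bloom structure induced by the coproduct injection inl : T → T ⊕ FY, is the free Bloom algebra on Y with universal arrow inr ∘ η : Y → T ⊕ FY: for every Bloom algebra (B,b,‡) and every morphism g : Y → B there is a unique solution-preserving algebra homomorphism h : T ⊕ FY → B with h ∘ inr ∘ η = g. -/
open CategoryTheory CategoryTheory.Limits CategoryTheory.Endofunctor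

universe v u

variable {A : Type u} [Category.{v} A]

/-- Suppose `H` has a terminal coalgebra `(T, τ)` (with `t = τ⁻¹`), a free algebra
`(F₀, φ)` on `Y` with universal arrow `η`, and a coproduct `(C, c)` of `(T,t)` and
`(F₀,φ)` in `Alg H` with injections `i, j`. Equip `C` with the Bloom structure induced
by `i` (solutions are `s ≫ i` for the solution `s` in `T`). Then `C` is the free Bloom
algebra on `Y` with universal arrow `η ≫ j`: every morphism `g : Y ⟶ B₀` into a Bloom
algebra extends uniquely to a solution-preserving algebra homomorphism. -/
theorem free_bloom_algebra_is_coproduct (H : A ⥤ A)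
    (T : Endofunctor.Coalgebra H) (hT : IsTerminal T)
    (t : H.obj T.V ⟶ T.V) (ht1 : T.str ≫ t = 𝟙 T.V) (ht2 : t ≫ T.str = 𝟙 (H.obj T.V))
    (Y F₀ : A) (φ : H.obj F₀ ⟶ F₀) (η : Y ⟶ F₀)
    (hfree : ∀ (B₀ : A) (b : H.obj B₀ ⟶ B₀) (g : Y ⟶ B₀),
      ∃! h : F₀ ⟶ B₀, (φ ≫ h = H.map h ≫ b) ∧ η ≫ h = g)
    (C : A) (c : H.obj C ⟶ C) (i : T.V ⟶ C) (j : F₀ ⟶ C)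
    (hi : t ≫ i = H.map i ≫ c) (hj : φ ≫ j = H.map j ≫ c)
    (hcop : ∀ (D : A) (d : H.obj D ⟶ D) (f : T.V ⟶ D) (g : F₀ ⟶ D),
      t ≫ f = H.map f ≫ d → φ ≫ g = H.map g ≫ d →
      ∃! k : C ⟶ D, (c ≫ k = H.map k ≫ d) ∧ i ≫ k = f ∧ j ≫ k = g)
    (Ds : BloomStructure H C c)
    (hDs : ∀ (X : A) (e : X ⟶ H.obj X) (s : X ⟶ T.V),
      s = e ≫ H.map s ≫ t → Ds.sol X e = s ≫ i)
    (B₀ : A) (b : H.obj B₀ ⟶ B₀) (E : BloomStructure H B₀ b) (g : Y ⟶ B₀) :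
    ∃! h : C ⟶ B₀, (c ≫ h = H.map h ≫ b) ∧
      (∀ (X : A) (e : X ⟶ H.obj X), Ds.sol X e ≫ h = E.sol X e) ∧
      (η ≫ j) ≫ h = g := by
    -- the solution of the coalgebra T itself in B₀ is an algebra hom T.V ⟶ B₀
  have hTalg : t ≫ E.sol T.V T.str = H.map (E.sol T.V T.str) ≫ b := by
    conv_lhs => rw [E.isSol T.V T.str, ← Category.assoc, ht2, Category.id_comp]
  -- free extension of g
  obtain ⟨f, ⟨hf1, hf2⟩, hfuniq⟩ := hfree B₀ b g
  obtain ⟨k, ⟨hk1, hk2, hk3⟩, hkuniq⟩ := hcop B₀ b (E.sol T.V T.str) f hTalg hf1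
  -- solutions in C via terminality
  have hsol : ∀ (X : A) (e : X ⟶ H.obj X),
      Ds.sol X e = (hT.from ⟨X, e⟩).f ≫ i := by
    intro X e
    apply hDs
    have hh := (hT.from ⟨X, e⟩).h
    calc (hT.from ⟨X, e⟩).f = (hT.from ⟨X, e⟩).f ≫ T.str ≫ t := by
          rw [ht1, Category.comp_id]
      _ = e ≫ H.map (hT.from ⟨X, e⟩).f ≫ t := by
          rw [← Category.assoc, ← hh, Category.assoc]
  have hsolT : Ds.sol T.V T.str = i := by
    have := hDs T.V T.str (𝟙 T.V) (by simp [ht1])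
    simpa using this
  refine ⟨k, ⟨hk1, ?_, by rw [Category.assoc, hk3, hf2]⟩, ?_⟩
  · intro X e
    rw [hsol X e, Category.assoc, hk2]
    exact E.functorial X T.V e T.str (hT.from ⟨X, e⟩).f (hT.from ⟨X, e⟩).h
  · rintro h' ⟨h'1, h'2, h'3⟩
    apply hkuniq
    refine ⟨h'1, ?_, ?_⟩
    · rw [← hsolT]; exact h'2 T.V T.str
    · apply hfuniq
      constructor
      · rw [← Category.assoc, hj, Category.assoc, h'1, ← Category.assoc,
          ← H.map_comp]
      · rw [← Category.assoc]; exact h'3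
end

section
/- Let A be a complete category, and let H have a free Bloom algebra on an object Y such that A(Y, HY) is nonempty. Then the free Bloom algebra on Y is weakly initial in the category of Bloom algebras, and consequently H has a terminal coalgebra. -/
open CategoryTheory CategoryTheory.Limits CategoryTheory.Endofunctor

universe v u

variable {A : Type u} [Category.{v} A]

namespace BloomAux

variable {H : A ⥤ A}

@[simp] lemma comp_f {B C D : BloomAlg H} (u : B ⟶ C) (v : C ⟶ D) :
    (u ≫ v).f = u.f ≫ v.f := rfl

@[simp] lemma id_f (B : BloomAlg H) : (𝟙 B : B ⟶ B).f = 𝟙 B.a := rfl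

instance (B : BloomAlg H) : Nonempty (B ⟶ B) := ⟨𝟙 B⟩

/-- Given candidate Bloom data on a "subobject" of a Bloom algebra, the axioms hold. -/
lemma bloom_axioms_of_cancel {C : BloomAlg H} {Z : A} (q : Z ⟶ C.a)
    (cancel : ∀ {W : A} (a b : W ⟶ Z), a ≫ q = b ≫ q → a = b)
    (strZ : H.obj Z ⟶ Z) (hstr : strZ ≫ q = H.map q ≫ C.str)
    (solZ : ∀ X : Endofunctor.Coalgebra H, X.V ⟶ Z)
    (hsol : ∀ X, solZ X ≫ q = C.sol X) :
    (∀ X, solZ X = X.str ≫ H.map (solZ X) ≫ strZ) ∧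
    (∀ (X Y : Endofunctor.Coalgebra H) (h : X ⟶ Y), h.f ≫ solZ Y = solZ X) := by
  constructor
  · intro X
    apply cancel
    have key : (X.str ≫ H.map (solZ X) ≫ strZ) ≫ q = C.sol X := by
      rw [Category.assoc, Category.assoc, hstr, ← Category.assoc (H.map (solZ X)),
        ← H.map_comp, hsol X, ← C.isSol X]
    rw [hsol X, key]
  · intro X Y h
    apply cancel
    rw [Category.assoc, hsol, hsol, C.functorial X Y h]

/-- The Bloom algebra structure on `H.obj A0.a`. -/
def HAlg (A0 : BloomAlg H) : BloomAlg H where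
  a := H.obj A0.a
  str := H.map A0.str
  sol X := X.str ≫ H.map (A0.sol X)
  isSol X := by
    show X.str ≫ H.map (A0.sol X) = X.str ≫ H.map (X.str ≫ H.map (A0.sol X)) ≫ H.map A0.str
    rw [← H.map_comp, Category.assoc, ← A0.isSol X]
  functorial X Z h := by
    show h.f ≫ Z.str ≫ H.map (A0.sol Z) = X.str ≫ H.map (A0.sol X)
    rw [← Category.assoc, ← h.h, Category.assoc, ← H.map_comp, A0.functorial X Z h]

section Limit

variable [HasLimits A] (Afree : BloomAlg H)

/-- The family of underlying maps of all Bloom endomorphisms of `Afree`. -/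
def fam : (Afree ⟶ Afree) → (Afree.a ⟶ Afree.a) := fun h => h.f

noncomputable def e : wideEqualizer (fam Afree) ⟶ Afree.a := wideEqualizer.ι _

lemma he (h : Afree ⟶ Afree) : e Afree ≫ h.f = e Afree := by
  have := wideEqualizer.condition (fam Afree) h (𝟙 Afree)
  simpa [fam, e] using this

lemma e_cancel {Z : A} (a b : Z ⟶ wideEqualizer (fam Afree))
    (h : a ≫ e Afree = b ≫ e Afree) : a = b :=
  wideEqualizer.hom_ext h

lemma fam_cond {Z : A} (k : Z ⟶ Afree.a) (hk : ∀ h : Afree ⟶ Afree, k ≫ h.f = k) :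
    ∀ h₁ h₂ : Afree ⟶ Afree, k ≫ fam Afree h₁ = k ≫ fam Afree h₂ := fun h₁ h₂ => by
  show k ≫ h₁.f = k ≫ h₂.f
  rw [hk h₁, hk h₂]

noncomputable def Lstr : H.obj (wideEqualizer (fam Afree)) ⟶ wideEqualizer (fam Afree) :=
  wideEqualizer.lift (H.map (e Afree) ≫ Afree.str) (fam_cond Afree _ (fun h => by
    rw [Category.assoc, h.hom, ← Category.assoc, ← H.map_comp, he]))

lemma Lstr_e : Lstr Afree ≫ e Afree = H.map (e Afree) ≫ Afree.str :=
  wideEqualizer.lift_ι _ _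

noncomputable def Lsol (X : Endofunctor.Coalgebra H) : X.V ⟶ wideEqualizer (fam Afree) :=
  wideEqualizer.lift (Afree.sol X) (fam_cond Afree _ (fun h => h.pres X))

lemma Lsol_e (X : Endofunctor.Coalgebra H) : Lsol Afree X ≫ e Afree = Afree.sol X :=
  wideEqualizer.lift_ι _ _

/-- The "initial" Bloom algebra: the wide equalizer of all Bloom endomorphisms of `Afree`. -/
noncomputable def L : BloomAlg H where
  a := wideEqualizer (fam Afree)
  str := Lstr Afree
  sol := Lsol Afree
  isSol := (bloom_axioms_of_cancel (e Afree) (e_cancel Afree) (Lstr Afree) (Lstr_e Afree)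
    (Lsol Afree) (Lsol_e Afree)).1
  functorial := (bloom_axioms_of_cancel (e Afree) (e_cancel Afree) (Lstr Afree) (Lstr_e Afree)
    (Lsol Afree) (Lsol_e Afree)).2

/-- `e` as a Bloom homomorphism. -/
noncomputable def ebar : L Afree ⟶ Afree :=
  ⟨e Afree, Lstr_e Afree, Lsol_e Afree⟩

/-- Existence of homs out of `L`. -/
noncomputable def toAny (weak : ∀ B : BloomAlg H, Afree ⟶ B) (B : BloomAlg H) :
    L Afree ⟶ B := ebar Afree ≫ weak B

/-- Uniqueness of homs out of `L`, via equalizers. -/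
lemma unique_from_L (weak : ∀ B : BloomAlg H, Afree ⟶ B) {B : BloomAlg H}
    (u v : L Afree ⟶ B) : u = v := by
  apply BloomHom.ext
  let q : equalizer u.f v.f ⟶ (L Afree).a := equalizer.ι u.f v.f
  have hstr : (H.map q ≫ (L Afree).str) ≫ u.f = (H.map q ≫ (L Afree).str) ≫ v.f := by
    rw [Category.assoc, u.hom, Category.assoc, v.hom, ← Category.assoc, ← H.map_comp,
      ← Category.assoc, ← H.map_comp, equalizer.condition u.f v.f]
  have hsol : ∀ X : Endofunctor.Coalgebra H, ((L Afree).sol X ≫ u.f = (L Afree).sol X ≫ v.f) :=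
    fun X => by rw [u.pres X, v.pres X]
  have hq : ∀ {W : A} (a b : W ⟶ equalizer u.f v.f), a ≫ q = b ≫ q → a = b :=
    fun a b h => equalizer.hom_ext h
  have ax := bloom_axioms_of_cancel (C := L Afree) q hq
    (equalizer.lift (H.map q ≫ (L Afree).str) hstr) (equalizer.lift_ι _ _)
    (fun X => equalizer.lift ((L Afree).sol X) (hsol X)) (fun X => equalizer.lift_ι _ _)
  let E : BloomAlg H :=
    { a := equalizer u.f v.f
      str := equalizer.lift (H.map q ≫ (L Afree).str) hstr
      sol := fun X => equalizer.lift ((L Afree).sol X) (hsol X)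
      isSol := ax.1
      functorial := ax.2 }
  let qbar : E ⟶ L Afree := ⟨q, equalizer.lift_ι _ _, fun X => equalizer.lift_ι _ _⟩
  have hw' : e Afree ≫ (weak E).f ≫ q = 𝟙 _ := by
    apply e_cancel
    have h1 := he Afree (weak E ≫ qbar ≫ ebar Afree)
    simp only [comp_f] at h1
    rw [Category.id_comp]
    erw [Category.assoc, Category.assoc]
    exact h1
  have hqc : q ≫ u.f = q ≫ v.f := equalizer.condition u.f v.f
  have key : ∀ w : (L Afree).a ⟶ B.a, (e Afree ≫ (weak E).f ≫ q) ≫ w = w := fun w =>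
    (congrArg (· ≫ w) hw').trans (Category.id_comp w)
  have hu := (Category.assoc (e Afree) ((weak E).f ≫ q) u.f).trans
    (congrArg (e Afree ≫ ·) (Category.assoc (weak E).f q u.f))
  have hv := (Category.assoc (e Afree) ((weak E).f ≫ q) v.f).trans
    (congrArg (e Afree ≫ ·) (Category.assoc (weak E).f q v.f))
  have h3 : (e Afree ≫ (weak E).f ≫ q) ≫ u.f = (e Afree ≫ (weak E).f ≫ q) ≫ v.f :=
    hu.trans ((congrArg (fun k => e Afree ≫ (weak E).f ≫ k) hqc).trans hv.symm)
  exact (key u.f).symm.trans (h3.trans (key v.f))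

end Limit

end BloomAux

/-- In a complete category, if `H` has a free Bloom algebra on an object `Y` with
`A(Y, HY)` nonempty, then the free Bloom algebra is weakly initial among Bloom algebras
and `H` has a terminal coalgebra. -/
theorem free_bloom_weakly_initial_and_terminal_coalgebra [HasLimits A]
    (H : A ⥤ A) (Y : A) (hY : Nonempty (Y ⟶ H.obj Y))
    (Afree : BloomAlg H) (η : Y ⟶ Afree.a)
    (huniv : ∀ (B : BloomAlg H) (g : Y ⟶ B.a),
      ∃! h : Afree ⟶ B, η ≫ h.f = g) :
    (∀ B : BloomAlg H, Nonempty (Afree ⟶ B)) ∧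
      ∃ T : Endofunctor.Coalgebra H, Nonempty (IsTerminal T) := by
  obtain ⟨y⟩ := hY
  have weak : ∀ B : BloomAlg H, Afree ⟶ B := fun B =>
    (huniv B (B.sol ⟨Y, y⟩)).exists.choose
  refine ⟨fun B => ⟨weak B⟩, ?_⟩
  set A0 : BloomAlg H := BloomAux.L Afree with hA0
  let t : A0 ⟶ BloomAux.HAlg A0 := BloomAux.toAny Afree weak _
  have tpres : ∀ X : Endofunctor.Coalgebra H,
      A0.sol X ≫ t.f = X.str ≫ H.map (A0.sol X) := fun X => t.pres X
  have thom : A0.str ≫ t.f = H.map t.f ≫ H.map A0.str := t.hom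
  let T : Endofunctor.Coalgebra H := ⟨A0.a, t.f⟩
  -- each `A0.sol X` is a coalgebra hom into `T`
  let toT : ∀ X : Endofunctor.Coalgebra H, X ⟶ T := fun X =>
    ⟨A0.sol X, (tpres X).symm⟩
  -- `A0.sol T = 𝟙`
  let HT : Endofunctor.Coalgebra H := ⟨H.obj A0.a, H.map t.f⟩
  let c1 : T ⟶ HT := ⟨t.f, rfl⟩
  let c2 : HT ⟶ T := ⟨A0.str, thom.symm⟩
  have f1 : t.f ≫ A0.sol HT = A0.sol T := A0.functorial T HT c1
  have f2 : A0.str ≫ A0.sol T = A0.sol HT := A0.functorial HT T c2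
  have shom : A0.str ≫ A0.sol T = H.map (A0.sol T) ≫ A0.str := by
    rw [f2, ← f1]
    erw [H.map_comp, Category.assoc]
    have := A0.isSol HT
    conv_lhs => rw [this]
    rfl
  have spres : ∀ X : Endofunctor.Coalgebra H, A0.sol X ≫ A0.sol T = A0.sol X := fun X =>
    A0.functorial X T (toT X)
  let sEndo : A0 ⟶ A0 := ⟨A0.sol T, shom, spres⟩
  have hid : sEndo = 𝟙 A0 := BloomAux.unique_from_L Afree weak sEndo (𝟙 A0)
  have hsolT : A0.sol T = 𝟙 A0.a := congrArg BloomHom.f hid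
  refine ⟨T, ⟨IsTerminal.ofUniqueHom toT fun X m => ?_⟩⟩
  ext
  show m.f = A0.sol X
  have := A0.functorial X T m
  rwa [hsolT, Category.comp_id] at this
end

section
/- For H = Id on Set, the free corecursive algebra on a set Y is MY = ℕ × Y + 1: the unary algebra whose operation sends (n, y) to (n+1, y) and fixes the point of 1, with universal arrow y ↦ (0, y). -/
/-- A unary algebra `b : B → B` in `Set` is corecursive if every map `e : X → X` has a
unique solution `s` with `s = b ∘ s ∘ e`. -/
def IsCorecUnary (B : Type) (b : B → B) : Prop :=
  ∀ (X : Type) (e : X → X), ∃! s : X → B, ∀ x, s x = b (s (e x))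

/-- The algebra structure on `MY = ℕ × Y + 1`: `(n, y) ↦ (n+1, y)` and the point of `1`
is fixed. -/
def Mstr (Y : Type) : ℕ × Y ⊕ PUnit → ℕ × Y ⊕ PUnit
  | Sum.inl (n, y) => Sum.inl (n + 1, y)
  | Sum.inr u => Sum.inr u

/-- For `H = Id` on `Set`, `MY = ℕ × Y + 1` with the above operation is the free
corecursive algebra on `Y`, with universal arrow `y ↦ (0, y)`. -/
theorem free_corecursive_unary_algebra (Y : Type) :
    IsCorecUnary (ℕ × Y ⊕ PUnit) (Mstr Y) ∧
      ∀ (B : Type) (b : B → B), IsCorecUnary B b → ∀ g : Y → B,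
        ∃! h : ℕ × Y ⊕ PUnit → B,
          (∀ m, h (Mstr Y m) = b (h m)) ∧ ∀ y, h (Sum.inl (0, y)) = g y := by
  constructor
  · intro X e
    refine ⟨fun _ => Sum.inr PUnit.unit, fun x => rfl, ?_⟩
    intro s hs
    have key : ∀ n : ℕ, ∀ x (y : Y), s x ≠ Sum.inl (n, y) := by
      intro n
      induction n using Nat.strong_induction_on with
      | _ n ih =>
        intro x y hxy
        have hx := hs x
        rw [hxy] at hx
        cases hse : s (e x) with
        | inl q =>
          obtain ⟨m, y'⟩ := q
          rw [hse] at hx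
          simp [Mstr] at hx
          exact ih m (by omega) (e x) y' hse
        | inr u =>
          rw [hse] at hx
          simp [Mstr] at hx
    funext x
    cases hx : s x with
    | inl q => obtain ⟨n, y⟩ := q; exact absurd hx (key n x y)
    | inr u => cases u; rfl
  · intro B b hB g
    obtain ⟨s, hs, hsu⟩ := hB PUnit id
    have hpb : s PUnit.unit = b (s PUnit.unit) := hs PUnit.unit
    refine ⟨fun m => match m with
      | Sum.inl (n, y) => b^[n] (g y)
      | Sum.inr _ => s PUnit.unit, ⟨?_, fun y => rfl⟩, ?_⟩
    · intro m
      cases m with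
      | inl q =>
        obtain ⟨n, y⟩ := q
        show b^[n + 1] (g y) = b (b^[n] (g y))
        rw [Function.iterate_succ_apply']
      | inr u => exact hpb
    · rintro h' ⟨h1, h2⟩
      funext m
      cases m with
      | inl q =>
        obtain ⟨n, y⟩ := q
        show h' (Sum.inl (n, y)) = b^[n] (g y)
        induction n with
        | zero => simpa using h2 y
        | succ k ih =>
          have hk := h1 (Sum.inl (k, y))
          simp only [Mstr] at hk
          rw [hk, ih]; exact (Function.iterate_succ_apply' b k (g y)).symm
      | inr u =>
        cases u
        show h' (Sum.inr PUnit.unit) = s PUnit.unit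
        have hfix : (fun _ : PUnit => h' (Sum.inr PUnit.unit)) = s := by
          apply hsu
          intro x
          exact h1 (Sum.inr PUnit.unit)
        exact congrFun hfix PUnit.unit
end

section
/- Let M be the monad of free corecursive algebras for H, which is ideal with ideal HM. Then M is a corecursive monad: every ideal equation morphism e = δ_X ∘ e₀ with e₀ : X → HMX has, in every corecursive H-algebra (A,a) with induced Eilenberg-Moore structure ā : MA → A, a unique solution e† : X → A satisfying e† = ā ∘ M(e†) ∘ e. -/
open CategoryTheory

universe v u

variable {A : Type u} [Category.{v} A]

/-- If `(B, b)` is a corecursive algebra, then so is `(H B, H b)`. -/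
lemma isCorecursiveAlg_map (H : A ⥤ A) (B : A) (b : H.obj B ⟶ B)
    (hb : IsCorecursiveAlg H B b) : IsCorecursiveAlg H (H.obj B) (H.map b) := by
  intro X e
  obtain ⟨sb, hsb, hsb_uniq⟩ := hb X e
  refine ⟨e ≫ H.map sb, ?_, ?_⟩
  · have h1 : (e ≫ H.map sb) ≫ b = sb := by
      rw [Category.assoc]; exact hsb.symm
    calc e ≫ H.map sb = e ≫ H.map ((e ≫ H.map sb) ≫ b) := by rw [h1]
      _ = e ≫ H.map (e ≫ H.map sb) ≫ H.map b := by rw [H.map_comp]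
  · intro s' hs'
    have h2 : s' ≫ b = e ≫ H.map (s' ≫ b) ≫ b := by
      conv_lhs => rw [hs']
      rw [H.map_comp]; simp
    have h3 : s' ≫ b = sb := hsb_uniq _ h2
    conv_lhs => rw [hs']
    rw [← H.map_comp, h3]

/-- The monad `M` of free corecursive algebras is corecursive: every ideal equation
morphism `e = e₀ ≫ δ X` has a unique solution `s = e ≫ M.map s ≫ ā` in every corecursive
algebra `(A₀, a)` with induced Eilenberg-Moore structure `ā : M A₀ ⟶ A₀`. -/
theorem free_corecursive_monad_is_corecursive
    (H : A ⥤ A) (M : A ⥤ A)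
    (δ : ∀ Y : A, H.obj (M.obj Y) ⟶ M.obj Y) (η : ∀ Y : A, Y ⟶ M.obj Y)
    (hcor : ∀ Y : A, IsCorecursiveAlg H (M.obj Y) (δ Y))
    (hfree : ∀ (Y B₀ : A) (b : H.obj B₀ ⟶ B₀), IsCorecursiveAlg H B₀ b →
      ∀ g : Y ⟶ B₀, ∃! h : M.obj Y ⟶ B₀, (δ Y ≫ h = H.map h ≫ b) ∧ η Y ≫ h = g)
    (hmap : ∀ {Y Z : A} (f : Y ⟶ Z),
      (δ Y ≫ M.map f = H.map (M.map f) ≫ δ Z) ∧ η Y ≫ M.map f = f ≫ η Z)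
    (X A₀ : A) (e₀ : X ⟶ H.obj (M.obj X))
    (a : H.obj A₀ ⟶ A₀) (ha : IsCorecursiveAlg H A₀ a)
    (abar : M.obj A₀ ⟶ A₀)
    (habar : δ A₀ ≫ abar = H.map abar ≫ a) (hunit : η A₀ ≫ abar = 𝟙 A₀) :
    ∃! s : X ⟶ A₀, s = (e₀ ≫ δ X) ≫ M.map s ≫ abar := by
  -- a coalgebra structure `m` on `M X` with `η X ≫ m = e₀`
  obtain ⟨m, ⟨hm_hom, hm_unit⟩, hm_uniq⟩ :=
    hfree X (H.obj (M.obj X)) (H.map (δ X)) (isCorecursiveAlg_map H _ _ (hcor X)) e₀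
  -- for any `s : X ⟶ A₀`, `M.map s ≫ abar` is a homomorphism with unit `s`
  have ext_hom : ∀ s : X ⟶ A₀,
      (δ X ≫ (M.map s ≫ abar) = H.map (M.map s ≫ abar) ≫ a) ∧
        η X ≫ (M.map s ≫ abar) = s := by
    intro s
    constructor
    · calc δ X ≫ M.map s ≫ abar = (δ X ≫ M.map s) ≫ abar := by simp
        _ = (H.map (M.map s) ≫ δ A₀) ≫ abar := by rw [(hmap s).1]
        _ = H.map (M.map s) ≫ H.map abar ≫ a := by rw [Category.assoc, habar]
        _ = H.map (M.map s ≫ abar) ≫ a := by rw [H.map_comp, Category.assoc]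
    · calc η X ≫ M.map s ≫ abar = (η X ≫ M.map s) ≫ abar := by simp
        _ = s ≫ η A₀ ≫ abar := by rw [(hmap s).2, Category.assoc]
        _ = s := by rw [hunit, Category.comp_id]
  -- solve the coalgebra `m` in `A₀`
  obtain ⟨q, hq, hq_uniq⟩ := ha (M.obj X) m
  -- `q` is an algebra homomorphism
  have hq_hom : δ X ≫ q = H.map q ≫ a := by
    have h1 : δ X ≫ q = H.map m ≫ H.map (δ X ≫ q) ≫ a := by
      calc δ X ≫ q = δ X ≫ (m ≫ H.map q ≫ a) := by rw [← hq]
        _ = (δ X ≫ m) ≫ H.map q ≫ a := by simp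
        _ = (H.map m ≫ H.map (δ X)) ≫ H.map q ≫ a := by rw [hm_hom]
        _ = H.map m ≫ (H.map (δ X) ≫ H.map q) ≫ a := by simp
        _ = H.map m ≫ H.map (δ X ≫ q) ≫ a := by rw [H.map_comp]
    have h2 : H.map q ≫ a = H.map m ≫ H.map (H.map q ≫ a) ≫ a := by
      conv_lhs => rw [hq]
      rw [H.map_comp, H.map_comp]; simp
    obtain ⟨w, hw, hw_uniq⟩ := ha (H.obj (M.obj X)) (H.map m)
    rw [hw_uniq _ h1, hw_uniq _ h2]
  set s : X ⟶ A₀ := η X ≫ q with hs_def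
  -- `q` agrees with `M.map s ≫ abar` by uniqueness of homomorphic extensions of `s`
  obtain ⟨h, _, hh_uniq⟩ := hfree X A₀ a ha s
  have hq_ext : q = M.map s ≫ abar := by
    rw [hh_uniq q ⟨hq_hom, rfl⟩, hh_uniq _ (ext_hom s)]
  have hs_fix : s = (e₀ ≫ δ X) ≫ M.map s ≫ abar := by
    calc s = η X ≫ q := rfl
      _ = η X ≫ m ≫ H.map q ≫ a := by rw [← hq]
      _ = (η X ≫ m) ≫ H.map q ≫ a := by simp
      _ = e₀ ≫ H.map q ≫ a := by rw [hm_unit]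
      _ = e₀ ≫ δ X ≫ q := by rw [hq_hom]
      _ = (e₀ ≫ δ X) ≫ M.map s ≫ abar := by rw [← hq_ext]; simp
  refine ⟨s, hs_fix, ?_⟩
  intro s' hs'
  obtain ⟨hq'_hom, hq'_unit⟩ := ext_hom s'
  have key : ∀ q'' : M.obj X ⟶ A₀, δ X ≫ q'' = H.map q'' ≫ a → η X ≫ q'' = s' →
      q'' = q := by
    intro q'' hhom huq
    have hs'_eq : s' = e₀ ≫ H.map q'' ≫ a := by
      calc s' = (e₀ ≫ δ X) ≫ M.map s' ≫ abar := hs'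
        _ = e₀ ≫ (δ X ≫ M.map s' ≫ abar) := by simp
        _ = e₀ ≫ H.map (M.map s' ≫ abar) ≫ a := by rw [hq'_hom]
        _ = e₀ ≫ δ X ≫ M.map s' ≫ abar := by rw [← hq'_hom]
        _ = e₀ ≫ H.map q'' ≫ a := by
              rw [show (M.map s' ≫ abar : M.obj X ⟶ A₀) = q'' from ?_, hhom]
              obtain ⟨h', _, hh'_uniq⟩ := hfree X A₀ a ha s'
              rw [hh'_uniq _ ⟨(ext_hom s').1, (ext_hom s').2⟩, hh'_uniq q'' ⟨hhom, huq⟩]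
    have hmix_hom : δ X ≫ (m ≫ H.map q'' ≫ a) = H.map (m ≫ H.map q'' ≫ a) ≫ a := by
      calc δ X ≫ m ≫ H.map q'' ≫ a = (δ X ≫ m) ≫ H.map q'' ≫ a := by simp
        _ = (H.map m ≫ H.map (δ X)) ≫ H.map q'' ≫ a := by rw [hm_hom]
        _ = H.map m ≫ (H.map (δ X) ≫ H.map q'') ≫ a := by simp
        _ = H.map m ≫ H.map (δ X ≫ q'') ≫ a := by rw [H.map_comp]
        _ = H.map m ≫ H.map (H.map q'' ≫ a) ≫ a := by rw [hhom]
        _ = H.map (m ≫ H.map q'' ≫ a) ≫ a := by rw [H.map_comp, H.map_comp]; simp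
    have hmix_unit : η X ≫ (m ≫ H.map q'' ≫ a) = s' := by
      calc η X ≫ m ≫ H.map q'' ≫ a = (η X ≫ m) ≫ H.map q'' ≫ a := by simp
        _ = e₀ ≫ H.map q'' ≫ a := by rw [hm_unit]
        _ = s' := hs'_eq.symm
    obtain ⟨h', _, hh'_uniq⟩ := hfree X A₀ a ha s'
    have hfix : q'' = m ≫ H.map q'' ≫ a :=
      (hh'_uniq q'' ⟨hhom, huq⟩).trans (hh'_uniq _ ⟨hmix_hom, hmix_unit⟩).symm
    exact hq_uniq q'' hfix
  have hq'q : M.map s' ≫ abar = q := key _ hq'_hom hq'_unit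
  calc s' = η X ≫ (M.map s' ≫ abar) := hq'_unit.symm
    _ = η X ≫ q := by rw [hq'q]
    _ = s := rfl
end

section
/- In any corecursive ideal monad S on a category, the double iteration identity holds: for every ideal equation morphism e : X → SX, letting ê = μ_X ∘ Se : SX → SX, one has e† = (ê ∘ e)†, where † denotes the unique solution operation. -/
open CategoryTheory CategoryTheory.Limits

universe v u

variable {A : Type u} [Category.{v} A]

/-- In a corecursive ideal monad, the double iteration identity holds: for an ideal
equation morphism `e : X ⟶ S X` and `ê = S e ≫ μ_X`, the solutions of `e` and of
`ê ∘ e` coincide. -/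
theorem double_iteration_identity (T : CategoryTheory.Monad A)
    (S' : A ⥤ A) (σ : S' ⟶ T.toFunctor)
    (hcop : ∀ X : A, Nonempty (IsColimit (BinaryCofan.mk (σ.app X) (T.η.app X))))
    (μ' : T.toFunctor ⋙ S' ⟶ S')
    (hμ' : ∀ X : A, μ'.app X ≫ σ.app X = σ.app (T.toFunctor.obj X) ≫ T.μ.app X)
    (hcorec : ∀ (X : A) (e : X ⟶ T.toFunctor.obj X),
      (∃ e₀ : X ⟶ S'.obj X, e = e₀ ≫ σ.app X) →
      ∀ Y : A, ∃! s : X ⟶ T.toFunctor.obj Y, s = e ≫ T.toFunctor.map s ≫ T.μ.app Y)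
    (X : A) (e : X ⟶ T.toFunctor.obj X)
    (hideal : ∃ e₀ : X ⟶ S'.obj X, e = e₀ ≫ σ.app X)
    (Y : A) (s s' : X ⟶ T.toFunctor.obj Y)
    (hs : s = e ≫ T.toFunctor.map s ≫ T.μ.app Y)
    (hs' : s' = (e ≫ T.toFunctor.map e ≫ T.μ.app X) ≫ T.toFunctor.map s' ≫ T.μ.app Y) :
    s = s' := by
  obtain ⟨e₀, he₀⟩ := hideal
  -- ê ∘ e is ideal
  have hideal2 : ∃ e₁ : X ⟶ S'.obj X,
      e ≫ T.toFunctor.map e ≫ T.μ.app X = e₁ ≫ σ.app X := by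
    refine ⟨e₀ ≫ S'.map e ≫ μ'.app X, ?_⟩
    have hnat : σ.app X ≫ T.toFunctor.map e = S'.map e ≫ σ.app (T.toFunctor.obj X) :=
      (σ.naturality e).symm
    rw [Category.assoc, Category.assoc, hμ', he₀]
    simp [reassoc_of% hnat]
  -- s also solves the ê ∘ e equation
  have hsol : s = (e ≫ T.toFunctor.map e ≫ T.μ.app X) ≫ T.toFunctor.map s ≫ T.μ.app Y := by
    conv_lhs => rw [hs, hs]
    have hnatμ : T.μ.app X ≫ T.toFunctor.map s
        = T.toFunctor.map (T.toFunctor.map s) ≫ T.μ.app (T.toFunctor.obj Y) := by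
      exact (T.μ.naturality s).symm
    have hassoc : T.μ.app (T.toFunctor.obj Y) ≫ T.μ.app Y
        = T.toFunctor.map (T.μ.app Y) ≫ T.μ.app Y := by
      simpa using (T.assoc Y).symm
    simp only [Functor.map_comp, Category.assoc, reassoc_of% hnatμ, hassoc]
  obtain ⟨w, hw, huniq⟩ := hcorec X (e ≫ T.toFunctor.map e ≫ T.μ.app X) hideal2 Y
  rw [huniq s hsol, huniq s' hs']
end

section
/- In any corecursive ideal monad S, the parameter identity holds: for an ideal equation morphism e : X → SX with solutions e†_Y : X → SY and e†_Z : X → SZ, and any morphism h : Y → SZ, letting ĥ = μ_Z ∘ Sh : SY → SZ, one has e†_Z = ĥ ∘ e†_Y. -/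
open CategoryTheory CategoryTheory.Limits

universe v u

variable {A : Type u} [Category.{v} A]

/-- In a corecursive ideal monad, the parameter identity holds: for an ideal equation
morphism `e : X ⟶ S X` with solutions `s_Y : X ⟶ S Y` and `s_Z : X ⟶ S Z`, and for any
`h : Y ⟶ S Z` with `ĥ = S h ≫ μ_Z`, one has `s_Z = s_Y ≫ ĥ`. -/
theorem parameter_identity (T : CategoryTheory.Monad A)
    (S' : A ⥤ A) (σ : S' ⟶ T.toFunctor)
    (hcop : ∀ X : A, Nonempty (IsColimit (BinaryCofan.mk (σ.app X) (T.η.app X))))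
    (μ' : T.toFunctor ⋙ S' ⟶ S')
    (hμ' : ∀ X : A, μ'.app X ≫ σ.app X = σ.app (T.toFunctor.obj X) ≫ T.μ.app X)
    (hcorec : ∀ (X : A) (e : X ⟶ T.toFunctor.obj X),
      (∃ e₀ : X ⟶ S'.obj X, e = e₀ ≫ σ.app X) →
      ∀ Y : A, ∃! s : X ⟶ T.toFunctor.obj Y, s = e ≫ T.toFunctor.map s ≫ T.μ.app Y)
    (X : A) (e : X ⟶ T.toFunctor.obj X)
    (hideal : ∃ e₀ : X ⟶ S'.obj X, e = e₀ ≫ σ.app X)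
    (Y Z : A) (h : Y ⟶ T.toFunctor.obj Z)
    (sY : X ⟶ T.toFunctor.obj Y) (sZ : X ⟶ T.toFunctor.obj Z)
    (hsY : sY = e ≫ T.toFunctor.map sY ≫ T.μ.app Y)
    (hsZ : sZ = e ≫ T.toFunctor.map sZ ≫ T.μ.app Z) :
    sZ = sY ≫ T.toFunctor.map h ≫ T.μ.app Z := by
  obtain ⟨s, -, huniq⟩ := hcorec X e hideal Z
  have h1 : sZ = s := huniq sZ hsZ
  have h2 : sY ≫ T.toFunctor.map h ≫ T.μ.app Z = s := by
    apply huniq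
    conv_lhs => rw [hsY]
    simp only [Category.assoc, Functor.map_comp]
    congr 2
    rw [← T.μ.naturality_assoc h, ← Monad.assoc]
    rfl
  rw [h1, h2]
end
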